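/- Let f = Σ_{r=0}^n x_r^{d_1} g_r be a CW-Nagata polynomial of bidegree (d_1,d_2) with d_1 ≥ 2. For every i with 1 ≤ i ≤ d_1−1 and every j with 1 ≤ j ≤ d_2, the classes in A_{(i,j)} of the monomials X_s^i · U_1^{s_1}⋯U_m^{s_m}, where s ∈ {0,…,n}, s_1+⋯+s_m = j and u_1^{s_1}⋯u_m^{s_m} divides g_s, form a K-basis of A_{(i,j)}; in particular dim_K A_{(i,j)} = Σ_{r=0}^n f_{j,r}, where f_{j,r} is the number of monic monomials of degree j in u_1,…,u_m dividing g_r. -/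

import Mathlib

open MvPolynomial

namespace CW

variable {σ K : Type*} [CommSemiring K]

/-- A generic "monomial contraction-type" action of the polynomial ring on itself,
determined by a structure coefficient `ν c a` (the coefficient produced when the
operator monomial with exponent `a` acts on the monomial with exponent `c`). -/
noncomputable def genAct (ν : (σ →₀ ℕ) → (σ →₀ ℕ) → K) (α f : MvPolynomial σ K) :
    MvPolynomial σ K :=
  Finsupp.sum (AddMonoidAlgebra.coeff α) fun a ca => Finsupp.sum (AddMonoidAlgebra.coeff f) fun c cf => monomial (c - a) (ν c a * (ca * cf))

theorem genAct_zero_left (ν : (σ →₀ ℕ) → (σ →₀ ℕ) → K) (f : MvPolynomial σ K) :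
    genAct ν 0 f = 0 :=
  Finsupp.sum_zero_index

theorem genAct_zero_right (ν : (σ →₀ ℕ) → (σ →₀ ℕ) → K) (α : MvPolynomial σ K) :
    genAct ν α 0 = 0 := by
  unfold genAct
  simp only [AddMonoidAlgebra.coeff_zero, Finsupp.sum_zero_index, Finsupp.sum_fun_zero]

theorem genAct_add_left (ν : (σ →₀ ℕ) → (σ →₀ ℕ) → K) (α β f : MvPolynomial σ K) :
    genAct ν (α + β) f = genAct ν α f + genAct ν β f := by
  unfold genAct
  apply Finsupp.sum_add_index'
  · intro a
    simp only [mul_zero, zero_mul, map_zero, Finsupp.sum_fun_zero]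
  · intro a b₁ b₂
    rw [← Finsupp.sum_add]
    apply Finsupp.sum_congr
    intro c _
    rw [add_mul, mul_add, map_add]

theorem genAct_add_right (ν : (σ →₀ ℕ) → (σ →₀ ℕ) → K) (α f g : MvPolynomial σ K) :
    genAct ν α (f + g) = genAct ν α f + genAct ν α g := by
  unfold genAct
  rw [← Finsupp.sum_add]
  apply Finsupp.sum_congr
  intro a _
  apply Finsupp.sum_add_index'
  · intro c
    simp only [mul_zero, map_zero]
  · intro c c₁ c₂
    rw [mul_add, mul_add, map_add]

theorem genAct_monomial (ν : (σ →₀ ℕ) → (σ →₀ ℕ) → K) (a c : σ →₀ ℕ) (r s : K) :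
    genAct ν (monomial a r) (monomial c s) = monomial (c - a) (ν c a * (r * s)) := by
  unfold genAct
  rw [← single_eq_monomial a r, ← single_eq_monomial c s]
  rw [AddMonoidAlgebra.coeff_single, AddMonoidAlgebra.coeff_single,
    Finsupp.sum_single_index, Finsupp.sum_single_index]
  · simp only [mul_zero, map_zero]
  · simp only [mul_zero, zero_mul, map_zero, Finsupp.sum_fun_zero]

theorem genAct_mul {ν : (σ →₀ ℕ) → (σ →₀ ℕ) → K}
    (hν : ∀ c a b, ν c (a + b) = ν c b * ν (c - b) a) (α β f : MvPolynomial σ K) :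
    genAct ν (α * β) f = genAct ν α (genAct ν β f) := by
  induction α using MvPolynomial.induction_on' with
  | add p q hp hq => rw [add_mul, genAct_add_left, hp, hq, genAct_add_left]
  | monomial a r =>
    induction β using MvPolynomial.induction_on' with
    | add p q hp hq =>
      rw [mul_add, genAct_add_left, hp, hq, ← genAct_add_right, genAct_add_left]
    | monomial b s =>
      induction f using MvPolynomial.induction_on' with
      | add p q hp hq =>
        rw [genAct_add_right, hp, hq, ← genAct_add_right, ← genAct_add_right]
      | monomial c t =>
        rw [monomial_mul, genAct_monomial, genAct_monomial, genAct_monomial,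
          show c - (a + b) = c - b - a from by rw [tsub_tsub, add_comm], hν]
        congr 1
        ring

/-- The annihilator ideal of `f` under the action `genAct ν`. -/
noncomputable def annG (ν : (σ →₀ ℕ) → (σ →₀ ℕ) → K)
    (hν : ∀ c a b, ν c (a + b) = ν c b * ν (c - b) a) (f : MvPolynomial σ K) :
    Ideal (MvPolynomial σ K) where
  carrier := {α | genAct ν α f = 0}
  zero_mem' := genAct_zero_left ν f
  add_mem' := by
    intro a b ha hb
    show genAct ν (a + b) f = 0
    rw [genAct_add_left, ha, hb, add_zero]
  smul_mem' := by
    intro c α hα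
    show genAct ν (c * α) f = 0
    rw [genAct_mul hν, hα, genAct_zero_right]

/-- Structure coefficient of the contraction (apolarity) action: `X^a` sends `x^c`
to `x^(c-a)` if `a ≤ c` and to `0` otherwise. -/
noncomputable def cnu (c a : σ →₀ ℕ) : K :=
  open scoped Classical in if a ≤ c then 1 else 0

theorem cnu_mul (c a b : σ →₀ ℕ) :
    (cnu c (a + b) : K) = cnu c b * cnu (c - b) a := by
  classical
  unfold cnu
  by_cases hb : b ≤ c
  · by_cases ha : a ≤ c - b
    · have h : a + b ≤ c := (le_tsub_iff_right hb).mp ha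
      simp [hb, ha, h]
    · have h : ¬ a + b ≤ c := fun h => ha ((le_tsub_iff_right hb).mpr h)
      simp [hb, ha, h]
  · have h : ¬ a + b ≤ c := fun h => hb (le_trans le_add_self h)
    simp [hb, h]

/-- The contraction action `α ∘ f`. -/
noncomputable def cAct (α f : MvPolynomial σ K) : MvPolynomial σ K :=
  genAct cnu α f

/-- The annihilator `Ann(f)` of `f` under the contraction action, as an ideal. -/
noncomputable def cAnn (f : MvPolynomial σ K) : Ideal (MvPolynomial σ K) :=
  annG cnu cnu_mul f

theorem mem_cAnn {f α : MvPolynomial σ K} : α ∈ cAnn f ↔ cAct α f = 0 := Iff.rfl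

/-- The `K`-submodule of polynomials all of whose monomials satisfy `P`. -/
noncomputable def bihom (K : Type*) [CommSemiring K] {σ : Type*} (P : (σ →₀ ℕ) → Prop) :
    Submodule K (MvPolynomial σ K) where
  carrier := {p | ∀ c ∈ p.support, P c}
  zero_mem' := by
    intro c hc
    simp at hc
  add_mem' := by
    classical
    intro p q hp hq c hc
    rcases Finset.mem_union.mp (MvPolynomial.support_add hc) with h | h
    · exact hp c h
    · exact hq c h
  smul_mem' := by
    intro k p hp c hc
    exact hp c (MvPolynomial.support_smul hc)

/-- The x-degree of an exponent vector. -/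
def degX {n m : ℕ} (c : (Fin (n + 1) ⊕ Fin m) →₀ ℕ) : ℕ := ∑ r, c (Sum.inl r)

/-- The u-degree of an exponent vector. -/
def degU {n m : ℕ} (c : (Fin (n + 1) ⊕ Fin m) →₀ ℕ) : ℕ := ∑ k, c (Sum.inr k)

/-- The bihomogeneous component `T_(i,j)`. -/
noncomputable def Tbi (K : Type*) [CommSemiring K] {n m : ℕ} (i j : ℕ) :
    Submodule K (MvPolynomial (Fin (n + 1) ⊕ Fin m) K) :=
  bihom K fun c => degX c = i ∧ degU c = j

/-- The bigraded component `A_(i,j)` of `A = T ⧸ Ann(f)`: the image of `T_(i,j)`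
in the quotient. -/
noncomputable def Abi {K : Type*} [Field K] {n m : ℕ}
    (f : MvPolynomial (Fin (n + 1) ⊕ Fin m) K) (i j : ℕ) :
    Submodule K (MvPolynomial (Fin (n + 1) ⊕ Fin m) K ⧸ cAnn f) :=
  (Tbi K i j).map (Ideal.Quotient.mkₐ K (cAnn f)).toLinearMap


section Aux

open Finsupp

variable {n m : ℕ}

/-- The exponent vector `i·e_{inl r} + (mapDomain inr s)`. -/
noncomputable def emb (r : Fin (n + 1)) (i : ℕ) (s : Fin m →₀ ℕ) :
    (Fin (n + 1) ⊕ Fin m) →₀ ℕ :=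
  Finsupp.single (Sum.inl r) i + s.mapDomain Sum.inr

lemma emb_apply_inl (r r' : Fin (n + 1)) (i : ℕ) (s : Fin m →₀ ℕ) :
    emb r i s (Sum.inl r') = if r = r' then i else 0 := by
  classical
  have hnr : (Sum.inl r' : Fin (n+1) ⊕ Fin m) ∉ Set.range (Sum.inr : Fin m → _) := by
    rintro ⟨k, ⟨⟩⟩
  rw [emb, Finsupp.add_apply, Finsupp.mapDomain_notin_range _ _ hnr, add_zero,
    Finsupp.single_apply]
  simp

lemma emb_apply_inr (r : Fin (n + 1)) (i : ℕ) (s : Fin m →₀ ℕ) (k : Fin m) :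
    emb r i s (Sum.inr k) = s k := by
  classical
  rw [emb, Finsupp.add_apply, Finsupp.mapDomain_apply Sum.inr_injective,
    Finsupp.single_apply]
  simp

lemma degX_emb (r : Fin (n + 1)) (i : ℕ) (s : Fin m →₀ ℕ) :
    degX (emb r i s) = i := by
  classical
  simp [degX, emb_apply_inl]

lemma degU_emb (r : Fin (n + 1)) (i : ℕ) (s : Fin m →₀ ℕ) :
    degU (emb r i s) = ∑ k, s k := by
  simp [degU, emb_apply_inr]

lemma emb_le_emb {i d : ℕ} (hd : i ≤ d) {r : Fin (n + 1)} {s t : Fin m →₀ ℕ}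
    (hst : s ≤ t) : emb r i s ≤ emb r d t := by
  rw [Finsupp.le_def]
  rintro (r' | k)
  · rw [emb_apply_inl, emb_apply_inl]
    split <;> omega
  · rw [emb_apply_inr, emb_apply_inr]
    exact Finsupp.le_def.mp hst k

lemma eq_of_emb_le {i d : ℕ} (hi : 1 ≤ i) {r r' : Fin (n + 1)} {s t : Fin m →₀ ℕ}
    (h : emb r i s ≤ emb r' d t) : r' = r ∧ s ≤ t := by
  have h1 := Finsupp.le_def.mp h (Sum.inl r)
  rw [emb_apply_inl, emb_apply_inl, if_pos rfl] at h1
  have hr : r' = r := by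
    by_contra hne
    rw [if_neg hne] at h1; omega
  refine ⟨hr, Finsupp.le_def.mpr fun k => ?_⟩
  have h2 := Finsupp.le_def.mp h (Sum.inr k)
  rwa [emb_apply_inr, emb_apply_inr] at h2

lemma emb_sub {d i : ℕ} {r : Fin (n + 1)} {t s : Fin m →₀ ℕ} :
    emb r d t - emb r i s = emb r (d - i) (t - s) := by
  ext x
  cases x with
  | inl r' =>
    rw [Finsupp.tsub_apply, emb_apply_inl, emb_apply_inl, emb_apply_inl]
    split <;> simp
  | inr k =>
    rw [Finsupp.tsub_apply, emb_apply_inr, emb_apply_inr, emb_apply_inr,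
      Finsupp.tsub_apply]

lemma emb_inj {a a' : ℕ} (ha : 1 ≤ a) {r r' : Fin (n + 1)} {t t' : Fin m →₀ ℕ}
    (h : emb r a t = emb r' a' t') : r = r' ∧ a = a' ∧ t = t' := by
  have h1 : emb r a t (Sum.inl r) = emb r' a' t' (Sum.inl r) := by rw [h]
  rw [emb_apply_inl, emb_apply_inl, if_pos rfl] at h1
  have hr : r' = r := by
    by_contra hne
    rw [if_neg hne] at h1; omega
  subst hr
  rw [if_pos rfl] at h1
  refine ⟨rfl, h1, ?_⟩
  ext k
  have h2 : emb r' a t (Sum.inr k) = emb r' a' t' (Sum.inr k) := by rw [h]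
  rwa [emb_apply_inr, emb_apply_inr] at h2

/-- Dichotomy: a bihomogeneous exponent of bidegree `(i,j)` with `i ≥ 1` is either of
the basis form, or is `≤` no exponent of `f`. -/
lemma decomp {i j : ℕ} (hi : 1 ≤ i) (a : (Fin (n + 1) ⊕ Fin m) →₀ ℕ)
    (hX : degX a = i) (hU : degU a = j) (g : Fin (n + 1) → (Fin m →₀ ℕ)) (d : ℕ) :
    (∃ r s, ((∑ k, s k) = j ∧ s ≤ g r) ∧ a = emb r i s) ∨
      (∀ r, ¬ a ≤ emb r d (g r)) := by
  classical
  by_cases h : ∃ r, a ≤ emb r d (g r)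
  · obtain ⟨r, hr⟩ := h
    left
    set s : Fin m →₀ ℕ := Finsupp.comapDomain Sum.inr a Sum.inr_injective.injOn with hs
    have hak : ∀ k, a (Sum.inr k) = s k := fun k => rfl
    have hinl : ∀ r', r ≠ r' → a (Sum.inl r') = 0 := by
      intro r' hne
      have h2 := Finsupp.le_def.mp hr (Sum.inl r')
      rw [emb_apply_inl, if_neg hne] at h2; omega
    have har : a (Sum.inl r) = i := by
      rw [← hX, degX, Finset.sum_eq_single r (fun b _ hb => hinl b (Ne.symm hb))
        (fun hb => absurd (Finset.mem_univ r) hb)]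
    refine ⟨r, s, ⟨?_, ?_⟩, ?_⟩
    · rw [← hU, degU]
      exact (Finset.sum_congr rfl fun k _ => (hak k)).symm
    · refine Finsupp.le_def.mpr fun k => ?_
      have h2 := Finsupp.le_def.mp hr (Sum.inr k)
      rwa [emb_apply_inr, hak k] at h2
    · ext x
      cases x with
      | inl r' =>
        rw [emb_apply_inl]
        by_cases h' : r = r'
        · rw [if_pos h', ← h']; exact har
        · rw [if_neg h']; exact hinl r' h'
      | inr k => rw [emb_apply_inr, hak k]
  · right
    push_neg at h
    exact h

end Aux

section ActAux

variable {σ K : Type*} [CommSemiring K]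

lemma genAct_sum_right (ν : (σ →₀ ℕ) → (σ →₀ ℕ) → K) (α : MvPolynomial σ K)
    {ι : Type*} (s : Finset ι) (F : ι → MvPolynomial σ K) :
    genAct ν α (∑ x ∈ s, F x) = ∑ x ∈ s, genAct ν α (F x) := by
  classical
  induction s using Finset.induction with
  | empty => simp [genAct_zero_right]
  | @insert a s hx ih => rw [Finset.sum_insert hx, genAct_add_right, ih, Finset.sum_insert hx]

lemma genAct_sum_left (ν : (σ →₀ ℕ) → (σ →₀ ℕ) → K) (f : MvPolynomial σ K)
    {ι : Type*} (s : Finset ι) (F : ι → MvPolynomial σ K) :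
    genAct ν (∑ x ∈ s, F x) f = ∑ x ∈ s, genAct ν (F x) f := by
  classical
  induction s using Finset.induction with
  | empty => simp [genAct_zero_left]
  | @insert a s hx ih => rw [Finset.sum_insert hx, genAct_add_left, ih, Finset.sum_insert hx]

lemma cnu_zero_right (c : σ →₀ ℕ) : (cnu c 0 : K) = 1 := by
  classical
  rw [cnu, if_pos (zero_le : 0 ≤ c)]

lemma genAct_C (k : K) (h : MvPolynomial σ K) :
    genAct cnu (C k) h = k • h := by
  induction h using MvPolynomial.induction_on' with
  | monomial c t =>
    rw [show (C k : MvPolynomial σ K) = monomial 0 k from rfl, genAct_monomial,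
      cnu_zero_right, tsub_zero, one_mul, smul_monomial, smul_eq_mul]
  | add p q hp hq => rw [genAct_add_right, hp, hq, smul_add]

lemma cAct_smul (k : K) (α f : MvPolynomial σ K) :
    cAct (k • α) f = k • cAct α f := by
  rw [smul_eq_C_mul, cAct, genAct_mul cnu_mul, genAct_C]
  rfl

lemma cAct_monomial_monomial (a c : σ →₀ ℕ) :
    cAct (monomial a (1 : K)) (monomial c 1) =
      if a ≤ c then monomial (c - a) 1 else 0 := by
  classical
  rw [cAct, genAct_monomial, cnu]
  split <;> simp

end ActAux


section MainAux

variable {K : Type*} [Field K] {n m : ℕ}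

lemma X_pow_mul_monomial (r : Fin (n + 1)) (i : ℕ) (s : Fin m →₀ ℕ) :
    (MvPolynomial.X (Sum.inl r) : MvPolynomial (Fin (n + 1) ⊕ Fin m) K) ^ i *
      MvPolynomial.monomial (s.mapDomain Sum.inr) 1 = monomial (emb r i s) 1 := by
  rw [X_pow_eq_monomial, monomial_mul, one_mul]
  rfl

lemma cAct_sum_right (α : MvPolynomial (Fin (n + 1) ⊕ Fin m) K)
    {ι : Type*} (s : Finset ι) (F : ι → MvPolynomial (Fin (n + 1) ⊕ Fin m) K) :
    cAct α (∑ x ∈ s, F x) = ∑ x ∈ s, cAct α (F x) :=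
  genAct_sum_right cnu α s F

lemma cAct_sum_left (f : MvPolynomial (Fin (n + 1) ⊕ Fin m) K)
    {ι : Type*} (s : Finset ι) (F : ι → MvPolynomial (Fin (n + 1) ⊕ Fin m) K) :
    cAct (∑ x ∈ s, F x) f = ∑ x ∈ s, cAct (F x) f :=
  genAct_sum_left cnu f s F

lemma cAct_basis {d₁ i : ℕ} (hi : 1 ≤ i) (hid : i ≤ d₁)
    (g : Fin (n + 1) → (Fin m →₀ ℕ)) (r : Fin (n + 1)) (s : Fin m →₀ ℕ)
    (hs : s ≤ g r) :
    cAct (monomial (emb r i s) (1 : K)) (∑ r', monomial (emb r' d₁ (g r')) 1) =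
      monomial (emb r (d₁ - i) (g r - s)) 1 := by
  classical
  rw [cAct_sum_right,
    Finset.sum_congr rfl fun r' _ => cAct_monomial_monomial (emb r i s) (emb r' d₁ (g r')),
    Finset.sum_eq_single r]
  · rw [if_pos (emb_le_emb hid hs), emb_sub]
  · intro b _ hb
    rw [if_neg]
    intro hle
    exact hb ((eq_of_emb_le hi hle).1)
  · intro h
    exact absurd (Finset.mem_univ r) h

lemma cAct_zero_of {d₁ : ℕ} (g : Fin (n + 1) → (Fin m →₀ ℕ))
    (a : (Fin (n + 1) ⊕ Fin m) →₀ ℕ) (h : ∀ r, ¬ a ≤ emb r d₁ (g r)) (k : K) :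
    cAct (monomial a k) (∑ r', monomial (emb r' d₁ (g r')) 1) = 0 := by
  classical
  have hk : (monomial a k : MvPolynomial _ K) = k • monomial a 1 := by
    rw [smul_monomial, smul_eq_mul, mul_one]
  rw [hk, cAct_smul, cAct_sum_right,
    Finset.sum_congr rfl fun r' _ => cAct_monomial_monomial a (emb r' d₁ (g r')),
    Finset.sum_congr rfl fun r' _ => if_neg (h r')]
  simp

end MainAux

theorem stmt_1 {K : Type*} [Field K] [CharZero K] (n m d₁ d₂ : ℕ)
    (hd₁ : 2 ≤ d₁) (hd₂ : 2 ≤ d₂)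
    (g : Fin (n + 1) → (Fin m →₀ ℕ))
    (hgdeg : ∀ r, (∑ k, g r k) = d₂)
    (hginj : Function.Injective g)
    (f : MvPolynomial (Fin (n + 1) ⊕ Fin m) K)
    (hf : f = ∑ r, MvPolynomial.X (Sum.inl r) ^ d₁ *
      MvPolynomial.monomial ((g r).mapDomain Sum.inr) 1)
    (i j : ℕ) (hi : 1 ≤ i) (hid : i ≤ d₁ - 1) (hj : 1 ≤ j) (hjd : j ≤ d₂) :
    (∃ b : Module.Basis {p : Fin (n + 1) × (Fin m →₀ ℕ) // (∑ k, p.2 k) = j ∧ p.2 ≤ g p.1} K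
        (Abi f i j),
      ∀ p, (b p : MvPolynomial (Fin (n + 1) ⊕ Fin m) K ⧸ cAnn f) =
        Ideal.Quotient.mk (cAnn f)
          (MvPolynomial.X (Sum.inl (p : Fin (n + 1) × (Fin m →₀ ℕ)).1) ^ i *
            MvPolynomial.monomial ((p : Fin (n + 1) × (Fin m →₀ ℕ)).2.mapDomain Sum.inr) 1)) ∧
    Module.finrank K (Abi f i j) =
      ∑ r, ((Finset.Iic (g r)).filter fun s => (∑ k, s k) = j).card := by
  classical
  have hid' : i ≤ d₁ := le_trans hid (Nat.sub_le d₁ 1)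
  have hdi : 1 ≤ d₁ - i := by omega
  have hf' : f = ∑ r, monomial (emb r d₁ (g r)) 1 := by
    rw [hf]
    exact Finset.sum_congr rfl fun r _ => X_pow_mul_monomial r d₁ (g r)
  let e : {p : Fin (n + 1) × (Fin m →₀ ℕ) // (∑ k, p.2 k) = j ∧ p.2 ≤ g p.1} ≃
      Σ r : Fin (n + 1), {s // s ∈ (Finset.Iic (g r)).filter fun s => (∑ k, s k) = j} :=
    { toFun := fun p => ⟨p.1.1, ⟨p.1.2, by
        simp only [Finset.mem_filter, Finset.mem_Iic]
        exact ⟨p.2.2, p.2.1⟩⟩⟩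
      invFun := fun q => ⟨(q.1, q.2.1), by
        have hq := q.2.2
        simp only [Finset.mem_filter, Finset.mem_Iic] at hq
        exact ⟨hq.2, hq.1⟩⟩
      left_inv := fun p => rfl
      right_inv := fun q => rfl }
  haveI : Fintype {p : Fin (n + 1) × (Fin m →₀ ℕ) // (∑ k, p.2 k) = j ∧ p.2 ≤ g p.1} :=
    Fintype.ofEquiv _ e.symm
  set v : {p : Fin (n + 1) × (Fin m →₀ ℕ) // (∑ k, p.2 k) = j ∧ p.2 ≤ g p.1} →
      (MvPolynomial (Fin (n + 1) ⊕ Fin m) K ⧸ cAnn f) :=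
    fun p => Ideal.Quotient.mk (cAnn f) (monomial (emb p.1.1 i p.1.2) 1) with hv
  have hMmem : ∀ p : {p : Fin (n + 1) × (Fin m →₀ ℕ) // (∑ k, p.2 k) = j ∧ p.2 ≤ g p.1},
      (monomial (emb p.1.1 i p.1.2) (1 : K)) ∈ Tbi K i j := by
    intro p c hc
    rw [support_monomial, if_neg one_ne_zero, Finset.mem_singleton] at hc
    subst hc
    exact ⟨degX_emb _ _ _, by rw [degU_emb]; exact p.2.1⟩
  -- linear independence
  have hli : LinearIndependent K v := by
    rw [Fintype.linearIndependent_iff]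
    intro c hc p
    have h0 : (∑ q, c q • monomial (emb q.1.1 i q.1.2) (1 : K)) ∈ cAnn f := by
      have hz : (Ideal.Quotient.mkₐ K (cAnn f)).toLinearMap
          (∑ q, c q • monomial (emb q.1.1 i q.1.2) (1 : K)) = 0 := by
        rw [map_sum ((Ideal.Quotient.mkₐ K (cAnn f)).toLinearMap)
          (fun q => c q • monomial (emb q.1.1 i q.1.2) (1 : K)) Finset.univ]
        exact (Finset.sum_congr rfl fun q _ =>
          (Ideal.Quotient.mkₐ K (cAnn f)).toLinearMap.map_smul (c q) _).trans hc
      exact Ideal.Quotient.eq_zero_iff_mem.mp hz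
    have hact0 : cAct (∑ q, c q • monomial (emb q.1.1 i q.1.2) (1 : K)) f = 0 :=
      mem_cAnn.mp h0
    rw [cAct_sum_left,
      Finset.sum_congr rfl fun q _ => cAct_smul (c q) _ f,
      Finset.sum_congr rfl fun q _ => by
        rw [hf', cAct_basis hi hid' g q.1.1 q.1.2 q.2.2]] at hact0
    have hco := congrArg (coeff (emb p.1.1 (d₁ - i) (g p.1.1 - p.1.2))) hact0
    rw [coeff_sum, coeff_zero] at hco
    rw [Finset.sum_eq_single p] at hco
    · rwa [smul_monomial, coeff_monomial, if_pos rfl, smul_eq_mul, mul_one] at hco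
    · intro q _ hq
      have hne : emb q.1.1 (d₁ - i) (g q.1.1 - q.1.2) ≠
          emb p.1.1 (d₁ - i) (g p.1.1 - p.1.2) := by
        intro heq
        obtain ⟨hr, -, hsub⟩ := emb_inj hdi heq
        apply hq
        have hs : q.1.2 = p.1.2 := by
          have h1 : g q.1.1 - (g q.1.1 - q.1.2) = q.1.2 := tsub_tsub_cancel_of_le q.2.2
          have h2 : g p.1.1 - (g p.1.1 - p.1.2) = p.1.2 := tsub_tsub_cancel_of_le p.2.2
          rw [hr] at hsub h1
          rw [← h1, hsub, h2]
        exact Subtype.ext (Prod.ext hr hs)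
      rw [smul_monomial, coeff_monomial, if_neg hne]
    · intro hp
      exact absurd (Finset.mem_univ p) hp
  -- spanning
  have hspan : Abi f i j = Submodule.span K (Set.range v) := by
    apply le_antisymm
    · rintro x hx
      rw [Abi, Submodule.mem_map] at hx
      obtain ⟨y, hy, rfl⟩ := hx
      have hy2 : (Ideal.Quotient.mkₐ K (cAnn f)).toLinearMap y =
          ∑ c ∈ y.support, coeff c y • Ideal.Quotient.mk (cAnn f) (monomial c 1) := by
        conv_lhs => rw [as_sum y]
        rw [map_sum]
        refine Finset.sum_congr rfl fun c _ => ?_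
        rw [show (monomial c (coeff c y) : MvPolynomial _ K) =
          coeff c y • monomial c 1 by rw [smul_monomial, smul_eq_mul, mul_one]]
        exact map_smul (Ideal.Quotient.mkₐ K (cAnn f)) _ _
      rw [hy2]
      refine Submodule.sum_mem _ fun c hc => ?_
      obtain ⟨hXc, hUc⟩ := hy c hc
      refine Submodule.smul_mem _ _ ?_
      rcases decomp hi c hXc hUc g d₁ with ⟨r, s, ⟨hsj, hsg⟩, rfl⟩ | hnone
      · exact Submodule.subset_span ⟨⟨(r, s), hsj, hsg⟩, rfl⟩
      · have hz : Ideal.Quotient.mk (cAnn f) (monomial c (1 : K)) = 0 := by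
          rw [Ideal.Quotient.eq_zero_iff_mem, mem_cAnn, hf']
          exact cAct_zero_of g c hnone 1
        rw [hz]
        exact Submodule.zero_mem _
    · rw [Submodule.span_le]
      rintro x ⟨p, rfl⟩
      exact ⟨monomial (emb p.1.1 i p.1.2) 1, hMmem p, rfl⟩
  let b0 := Module.Basis.span hli
  let b := b0.map (LinearEquiv.ofEq _ _ hspan.symm)
  constructor
  · refine ⟨b, fun p => ?_⟩
    have hb : ((b p : Abi f i j) : MvPolynomial (Fin (n + 1) ⊕ Fin m) K ⧸ cAnn f) = v p := by
      show ((b0.map (LinearEquiv.ofEq _ _ hspan.symm) p : Abi f i j) :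
        MvPolynomial (Fin (n + 1) ⊕ Fin m) K ⧸ cAnn f) = v p
      rw [Module.Basis.map_apply, LinearEquiv.coe_ofEq_apply, Module.Basis.span_apply]
    rw [hb, hv]
    exact congrArg _ (X_pow_mul_monomial p.1.1 i p.1.2).symm
  · rw [Module.finrank_eq_card_basis b, Fintype.card_congr e, Fintype.card_sigma]
    exact Finset.sum_congr rfl fun r _ => Fintype.card_coe _


end CW
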